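/- Let P_1, ..., P_s be nonzero polynomials in ℂ[T] with product P = P_1 ⋯ P_s. Then e^{-deg(P)} ‖P‖ ≤ ‖P_1‖ ⋯ ‖P_s‖ ≤ e^{deg(P)} ‖P‖, where ‖·‖ denotes the maximum of the absolute values of the coefficients. -/

import Mathlib

open Polynomial Finset Complex

/-- The norm of a complex polynomial: the maximum of the absolute values of its coefficients. -/
noncomputable def cnorm (P : Polynomial ℂ) : ℝ :=
  (Finset.range (P.natDegree + 1)).sup' Finset.nonempty_range_add_one fun i =>
    ‖P.coeff i‖

lemma abs_coeff_le_cnorm (P : Polynomial ℂ) (k : ℕ) : ‖P.coeff k‖ ≤ cnorm P := by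
  rcases le_or_gt k P.natDegree with h | h
  · exact Finset.le_sup' (α := ℝ) (fun i => ‖P.coeff i‖)
      (Finset.mem_range.2 (Nat.lt_succ_of_le h))
  · rw [P.coeff_eq_zero_of_natDegree_lt h, norm_zero]
    exact le_trans (by positivity) (Finset.le_sup' (α := ℝ) (fun i => ‖P.coeff i‖)
      (Finset.mem_range.2 (Nat.lt_succ_of_le le_rfl)))

lemma cnorm_nonneg (P : Polynomial ℂ) : 0 ≤ cnorm P :=
  le_trans (by positivity) (abs_coeff_le_cnorm P 0)

lemma cnorm_one : cnorm (1 : Polynomial ℂ) = 1 := by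
  simp [cnorm]

/-- Auxiliary function : `max 1 |z|`. -/
noncomputable def mx : ℂ → ℝ := fun z => max 1 (‖z‖)

/-- The (absolute) Mahler measure of a complex polynomial. -/
noncomputable def M (P : Polynomial ℂ) : ℝ :=
  ‖P.leadingCoeff‖ * ((P.roots).map mx).prod

lemma abs_prod_le (u : Multiset ℂ) : ‖u.prod‖ ≤ (u.map mx).prod := by
  induction u using Multiset.induction with
  | empty => simp
  | cons z u ih =>
    rw [Multiset.prod_cons, norm_mul, Multiset.map_cons, Multiset.prod_cons]
    exact mul_le_mul (le_max_right _ _) ih (norm_nonneg _)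
      (le_trans zero_le_one (le_max_left _ _))

lemma one_le_prod_mx (t : Multiset ℂ) : 1 ≤ (t.map mx).prod := by
  apply Multiset.one_le_prod
  intro x hx
  simp only [Multiset.mem_map] at hx
  obtain ⟨z, _, rfl⟩ := hx
  exact le_max_left _ _

lemma M_nonneg (P : Polynomial ℂ) : 0 ≤ M P :=
  mul_nonneg (norm_nonneg _) (le_trans zero_le_one (one_le_prod_mx _))

lemma prod_mx_mono {u t : Multiset ℂ} (h : u ≤ t) : (u.map mx).prod ≤ (t.map mx).prod := by
  obtain ⟨w, rfl⟩ := Multiset.le_iff_exists_add.1 h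
  rw [Multiset.map_add, Multiset.prod_add]
  exact le_mul_of_one_le_right (le_trans zero_le_one (one_le_prod_mx u)) (one_le_prod_mx w)

lemma M_mul {p q : Polynomial ℂ} (hp : p ≠ 0) (hq : q ≠ 0) : M (p * q) = M p * M q := by
  unfold M
  rw [Polynomial.leadingCoeff_mul, norm_mul, Polynomial.roots_mul (mul_ne_zero hp hq),
    Multiset.map_add, Multiset.prod_add]
  ring

lemma roots_card (P : Polynomial ℂ) : Multiset.card P.roots = P.natDegree :=
  Polynomial.splits_iff_card_roots.1 (IsAlgClosed.splits P)

lemma abs_esymm_le (t : Multiset ℂ) (j : ℕ) :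
    ‖t.esymm j‖ ≤ ((Multiset.card t).choose j : ℝ) * (t.map mx).prod := by
  rw [Multiset.esymm]
  refine le_trans (norm_multiset_sum_le _) ?_
  have : ∀ x ∈ ((t.powersetCard j).map Multiset.prod).map norm, x ≤ (t.map mx).prod := by
    intro x hx
    simp only [Multiset.map_map, Multiset.mem_map, Function.comp] at hx
    obtain ⟨u, hu, rfl⟩ := hx
    exact le_trans (abs_prod_le u) (prod_mx_mono (Multiset.mem_powersetCard.1 hu).1)
  refine le_trans (Multiset.sum_le_card_nsmul _ _ this) ?_
  rw [Multiset.card_map, Multiset.card_map, Multiset.card_powersetCard]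
  rw [nsmul_eq_mul]

lemma abs_coeff_le_choose {P : Polynomial ℂ} (h : P ≠ 0) (k : ℕ) :
    ‖P.coeff k‖ ≤ (P.natDegree.choose k : ℝ) * M P := by
  rcases le_or_gt k P.natDegree with hk | hk
  · rw [Polynomial.coeff_eq_esymm_roots_of_card (roots_card P) hk]
    have h1 : ‖(-1 : ℂ) ^ (P.natDegree - k)‖ = 1 := by
      rw [norm_pow]; simp
    rw [norm_mul, norm_mul, h1, mul_one]
    refine le_trans (mul_le_mul_of_nonneg_left (abs_esymm_le _ _) (norm_nonneg _)) ?_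
    rw [roots_card, Nat.choose_symm hk, M]
    ring_nf
    exact le_refl _
  · rw [P.coeff_eq_zero_of_natDegree_lt hk, norm_zero]
    exact mul_nonneg (Nat.cast_nonneg _) (M_nonneg P)

/-- Truncated sum of squares of coefficient absolute values. -/
noncomputable def sq2 (P : Polynomial ℂ) (N : ℕ) : ℝ :=
  ∑ i ∈ Finset.range N, ‖P.coeff i‖ ^ 2

lemma pointwise (u v z : ℂ) :
    ‖u - z * v‖ ^ 2 - ‖(starRingEnd ℂ) z * u - v‖ ^ 2
      = (1 - normSq z) * (normSq u - normSq v) := by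
  simp only [Complex.sq_norm, Complex.normSq_sub, map_mul, Complex.normSq_conj]
  have h : u * ((starRingEnd ℂ) z * (starRingEnd ℂ) v) = ((starRingEnd ℂ) z * u) * ((starRingEnd ℂ) v) := by
    ring
  rw [h]
  ring

lemma swap_lemma (z : ℂ) (R : Polynomial ℂ) (N : ℕ) (hN : R.natDegree < N) :
    sq2 ((X - C z) * R) (N + 1) = sq2 ((C ((starRingEnd ℂ) z) * X - C 1) * R) (N + 1) := by
  set b : ℕ → ℂ := fun i => R.coeff i with hb
  have hA : ∀ i, ((X - C z) * R).coeff (i + 1) = b i - z * b (i + 1) := by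
    intro i
    rw [sub_mul, Polynomial.coeff_sub, Polynomial.coeff_X_mul, Polynomial.coeff_C_mul]
  have hA0 : ((X - C z) * R).coeff 0 = -(z * b 0) := by
    rw [sub_mul, Polynomial.coeff_sub, Polynomial.mul_coeff_zero, Polynomial.coeff_X_zero,
      Polynomial.coeff_C_mul, zero_mul, zero_sub]
  have hB : ∀ i, ((C ((starRingEnd ℂ) z) * X - C 1) * R).coeff (i + 1)
      = (starRingEnd ℂ) z * b i - b (i + 1) := by
    intro i
    rw [sub_mul, Polynomial.coeff_sub, mul_assoc, Polynomial.coeff_C_mul,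
      Polynomial.coeff_X_mul, Polynomial.C_1, one_mul]
  have hB0 : ((C ((starRingEnd ℂ) z) * X - C 1) * R).coeff 0 = -(b 0) := by
    rw [sub_mul, Polynomial.coeff_sub, mul_assoc, Polynomial.coeff_C_mul,
      Polynomial.mul_coeff_zero, Polynomial.coeff_X_zero, zero_mul, mul_zero,
      Polynomial.C_1, one_mul, zero_sub]
  have hbN : b N = 0 := R.coeff_eq_zero_of_natDegree_lt hN
  rw [← sub_eq_zero]
  unfold sq2
  rw [Finset.sum_range_succ', Finset.sum_range_succ']
  simp only [hA, hA0, hB, hB0]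
  have key : ∑ i ∈ Finset.range N, ‖b i - z * b (i + 1)‖ ^ 2
      - ∑ i ∈ Finset.range N, ‖(starRingEnd ℂ) z * b i - b (i + 1)‖ ^ 2
      = (1 - normSq z) * (normSq (b 0) - normSq (b N)) := by
    rw [← Finset.sum_sub_distrib]
    have : ∀ i ∈ Finset.range N,
        ‖b i - z * b (i + 1)‖ ^ 2 - ‖(starRingEnd ℂ) z * b i - b (i + 1)‖ ^ 2
        = (fun i => (1 - normSq z) * normSq (b i)) i - (fun i => (1 - normSq z) * normSq (b i)) (i+1) := by
      intro i _
      rw [pointwise]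
      ring
    rw [Finset.sum_congr rfl this, Finset.sum_range_sub']
    ring
  have e1 : ‖-(z * b 0)‖ ^ 2 = normSq z * normSq (b 0) := by
    rw [Complex.sq_norm, Complex.normSq_neg, map_mul]
  have e2 : ‖-(b 0)‖ ^ 2 = normSq (b 0) := by
    rw [Complex.sq_norm, Complex.normSq_neg]
  rw [hbN, map_zero] at key
  rw [e1, e2]
  linarith [key]

lemma lin_eq (a : ℂ) : (C a * X - C 1 : Polynomial ℂ) = C a * X + C (-1) := by
  rw [map_neg, sub_eq_add_neg]

lemma lin_natDegree_le (a : ℂ) : (C a * X - C 1 : Polynomial ℂ).natDegree ≤ 1 := by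
  rw [lin_eq]; exact Polynomial.natDegree_linear_le

lemma swap_all (t : Multiset ℂ) : ∀ (R : Polynomial ℂ) (N : ℕ),
    Multiset.card t + R.natDegree ≤ N →
    sq2 ((t.map (fun w => X - C w)).prod * R) (N + 1)
      = sq2 ((t.map (fun w => C ((starRingEnd ℂ) w) * X - C 1)).prod * R) (N + 1) := by
  induction t using Multiset.induction with
  | empty => intro R N _; simp
  | cons z t ih =>
    intro R N hN
    rw [Multiset.card_cons] at hN
    rw [Multiset.map_cons, Multiset.map_cons, Multiset.prod_cons, Multiset.prod_cons,
      mul_assoc, mul_assoc]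
    have hdeg : ((t.map (fun w => X - C w)).prod * R).natDegree < N := by
      have h1 := Polynomial.natDegree_mul_le (p := (t.map (fun w => X - C w)).prod) (q := R)
      have h2 := natDegree_multiset_prod_X_sub_C_eq_card t
      omega
    rw [swap_lemma z _ N hdeg]
    have hcomm : (C ((starRingEnd ℂ) z) * X - C 1) * ((t.map (fun w => X - C w)).prod * R)
        = (t.map (fun w => X - C w)).prod * ((C ((starRingEnd ℂ) z) * X - C 1) * R) := by
      ring
    have hR' : Multiset.card t + ((C ((starRingEnd ℂ) z) * X - C 1) * R).natDegree ≤ N := by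
      have h1 := Polynomial.natDegree_mul_le (p := (C ((starRingEnd ℂ) z) * X - C 1)) (q := R)
      have h2 := lin_natDegree_le ((starRingEnd ℂ) z)
      omega
    rw [hcomm, ih ((C ((starRingEnd ℂ) z) * X - C 1) * R) N hR']
    congr 1
    ring

lemma sq2_C_mul (c : ℂ) (A : Polynomial ℂ) (N : ℕ) :
    sq2 (C c * A) N = ‖c‖ ^ 2 * sq2 A N := by
  unfold sq2
  rw [Finset.mul_sum]
  refine Finset.sum_congr rfl fun i _ => ?_
  rw [Polynomial.coeff_C_mul, norm_mul, mul_pow]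

/-- Landau's inequality : the Mahler measure is bounded by the `ℓ²`-norm of the coefficients. -/
lemma M_sq_le_sq2 {P : Polynomial ℂ} (hP : P ≠ 0) : M P ^ 2 ≤ sq2 P (P.natDegree + 1) := by
  set n := P.natDegree with hn
  set c := P.leadingCoeff with hc
  set s := P.roots with hs
  have hfact : C c * (s.map (fun w => X - C w)).prod = P :=
    Polynomial.C_leadingCoeff_mul_prod_multiset_X_sub_C (roots_card P)
  set s₁ := s.filter (fun z => 1 < ‖z‖) with hs₁
  set s₂ := s.filter (fun z => ¬ 1 < ‖z‖) with hs₂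
  have hsplit : s₁ + s₂ = s := Multiset.filter_add_not _ s
  have hcard : Multiset.card s₁ + Multiset.card s₂ = n := by
    rw [← Multiset.card_add, hsplit, hs, roots_card]
  have hP2 : sq2 P (n + 1) = ‖c‖ ^ 2 *
      sq2 ((s₁.map (fun w => X - C w)).prod * (s₂.map (fun w => X - C w)).prod) (n + 1) := by
    conv_lhs => rw [← hfact]
    rw [sq2_C_mul]
    congr 2
    rw [← hsplit, Multiset.map_add, Multiset.prod_add]
  have hdegR : (s₂.map (fun w => X - C w)).prod.natDegree = Multiset.card s₂ :=
    natDegree_multiset_prod_X_sub_C_eq_card s₂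
  have hswap := swap_all s₁ ((s₂.map (fun w => X - C w)).prod) n (by omega)
  set Q := (s₁.map (fun w => C ((starRingEnd ℂ) w) * X - C 1)).prod
      * (s₂.map (fun w => X - C w)).prod with hQ
  have hcoeff : ‖Q.coeff n‖ ^ 2 ≤ sq2 Q (n + 1) := by
    unfold sq2
    refine Finset.single_le_sum (f := fun i => ‖Q.coeff i‖ ^ 2)
      (fun i _ => by positivity) (Finset.mem_range.2 (Nat.lt_succ_self n))
  have hne : ∀ z ∈ s₁, (starRingEnd ℂ) z ≠ 0 := by
    intro z hz
    have h1 := (Multiset.mem_filter.1 hz).2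
    intro h
    have hz0 : z = 0 := (_root_.map_eq_zero (starRingEnd ℂ)).1 h
    rw [hz0] at h1; norm_num at h1
  have hdeg1 : (s₁.map (fun w => C ((starRingEnd ℂ) w) * X - C 1)).prod.natDegree
      = Multiset.card s₁ := by
    rw [Polynomial.natDegree_multiset_prod]
    · rw [Multiset.map_map]
      have : ∀ z ∈ s₁, (Polynomial.natDegree ∘ fun w => C ((starRingEnd ℂ) w) * X - C 1) z = 1 := by
        intro z hz
        simp only [Function.comp]
        rw [lin_eq]
        exact Polynomial.natDegree_linear (hne z hz)
      rw [Multiset.map_congr rfl this, Multiset.map_const', Multiset.sum_replicate, smul_eq_mul,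
        mul_one]
    · intro h
      simp only [Multiset.mem_map] at h
      obtain ⟨z, hz, hz2⟩ := h
      have h3 : ((C ((starRingEnd ℂ) z) * X - C 1 : Polynomial ℂ)).natDegree = 1 := by
        rw [lin_eq]; exact Polynomial.natDegree_linear (hne z hz)
      rw [hz2] at h3
      simp at h3
  have hlc1 : (s₁.map (fun w => C ((starRingEnd ℂ) w) * X - C 1)).prod.leadingCoeff
      = (s₁.map (starRingEnd ℂ)).prod := by
    rw [Polynomial.leadingCoeff_multiset_prod, Multiset.map_map]
    refine congrArg Multiset.prod (Multiset.map_congr rfl fun z hz => ?_)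
    simp only [Function.comp]
    rw [lin_eq]
    exact Polynomial.leadingCoeff_linear (hne z hz)
  have hmonic2 : ((s₂.map (fun w => X - C w)).prod).Monic :=
    monic_multiset_prod_of_monic _ _ fun a _ => monic_X_sub_C a
  have hQdeg : Q.natDegree = n := by
    rw [hQ, Polynomial.natDegree_mul, hdeg1, hdegR]
    · exact hcard
    · refine Multiset.prod_ne_zero ?_
      intro h
      simp only [Multiset.mem_map] at h
      obtain ⟨z, hz, hz2⟩ := h
      have h3 : ((C ((starRingEnd ℂ) z) * X - C 1 : Polynomial ℂ)).natDegree = 1 := by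
        rw [lin_eq]; exact Polynomial.natDegree_linear (hne z hz)
      rw [hz2] at h3
      simp at h3
    · exact hmonic2.ne_zero
  have hQlc : Q.leadingCoeff = (s₁.map (starRingEnd ℂ)).prod := by
    rw [hQ, Polynomial.leadingCoeff_mul, hlc1, hmonic2.leadingCoeff, mul_one]
  have hQcoeffn : Q.coeff n = (s₁.map (starRingEnd ℂ)).prod := by
    rw [← hQlc, Polynomial.leadingCoeff, hQdeg]
  have habsgen : ∀ t : Multiset ℂ, ‖t.prod‖ = (t.map (fun x => ‖x‖)).prod := by
    intro t
    induction t using Multiset.induction with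
    | empty => simp
    | cons w t ih => rw [Multiset.prod_cons, norm_mul, Multiset.map_cons, Multiset.prod_cons, ih]
  have habsQ : ‖Q.coeff n‖ = (s₁.map (fun x => ‖x‖)).prod := by
    rw [hQcoeffn, habsgen, Multiset.map_map]
    refine congrArg Multiset.prod (Multiset.map_congr rfl fun z _ => ?_)
    simp [Complex.norm_conj]
  have hMP : M P = ‖c‖ * (s₁.map (fun x => ‖x‖)).prod := by
    unfold M
    rw [← hs, ← hc, ← hsplit, Multiset.map_add, Multiset.prod_add]
    have h1 : (s₁.map mx).prod = (s₁.map (fun x => ‖x‖)).prod := by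
      refine congrArg Multiset.prod (Multiset.map_congr rfl fun z hz => ?_)
      have := (Multiset.mem_filter.1 hz).2
      simp only [mx]
      exact max_eq_right (le_of_lt this)
    have h2 : (s₂.map mx).prod = 1 := by
      have : (s₂.map mx) = Multiset.replicate (Multiset.card s₂) 1 := by
        rw [Multiset.eq_replicate]
        constructor
        · rw [Multiset.card_map]
        · intro x hx
          simp only [Multiset.mem_map] at hx
          obtain ⟨z, hz, rfl⟩ := hx
          have := (Multiset.mem_filter.1 hz).2
          simp only [mx]
          exact max_eq_left (not_lt.1 this)
      rw [this, Multiset.prod_replicate, one_pow]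
    rw [h1, h2, mul_one]
  rw [hMP, mul_pow, hP2, hswap]
  refine mul_le_mul_of_nonneg_left ?_ (by positivity)
  rw [← habsQ]
  exact hcoeff

lemma choose_le_two_pow (n k : ℕ) : n.choose k ≤ 2 ^ n := by
  rcases le_or_gt k n with h | h
  · calc n.choose k ≤ ∑ i ∈ Finset.range (n+1), n.choose i :=
        Finset.single_le_sum (f := fun i => n.choose i) (fun i _ => Nat.zero_le _)
          (Finset.mem_range.2 (Nat.lt_succ_of_le h))
    _ = 2 ^ n := Nat.sum_range_choose n
  · rw [Nat.choose_eq_zero_of_lt h]; exact Nat.zero_le _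

lemma cnorm_mul_le (p q : Polynomial ℂ) :
    cnorm (p * q) ≤ (p.natDegree + 1 : ℝ) * (cnorm p * cnorm q) := by
  have key : ∀ k, ‖(p * q).coeff k‖ ≤ (p.natDegree + 1 : ℝ) * (cnorm p * cnorm q) := by
    intro k
    rw [Polynomial.coeff_mul]
    refine le_trans (norm_sum_le _ _) ?_
    have hsub : (Finset.HasAntidiagonal.antidiagonal k).filter (fun x => x.1 ≤ p.natDegree) ⊆
        (Finset.HasAntidiagonal.antidiagonal k) := Finset.filter_subset _ _
    have hzero : ∀ x ∈ Finset.HasAntidiagonal.antidiagonal k, x ∉ (Finset.HasAntidiagonal.antidiagonal k).filter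
        (fun x : ℕ × ℕ => x.1 ≤ p.natDegree) → ‖p.coeff x.1 * q.coeff x.2‖ = 0 := by
      intro x hx hx2
      simp only [Finset.mem_filter, hx, true_and, not_le] at hx2
      rw [p.coeff_eq_zero_of_natDegree_lt hx2, zero_mul, norm_zero]
    rw [← Finset.sum_subset hsub (fun x h1 h2 => hzero x h1 h2)]
    have hbound : ∀ x ∈ (Finset.HasAntidiagonal.antidiagonal k).filter (fun x : ℕ × ℕ => x.1 ≤ p.natDegree),
        ‖p.coeff x.1 * q.coeff x.2‖ ≤ cnorm p * cnorm q := by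
      intro x _
      rw [norm_mul]
      exact mul_le_mul (abs_coeff_le_cnorm p x.1) (abs_coeff_le_cnorm q x.2)
        (norm_nonneg _) (cnorm_nonneg p)
    refine le_trans (Finset.sum_le_sum hbound) ?_
    rw [Finset.sum_const, nsmul_eq_mul]
    refine mul_le_mul_of_nonneg_right ?_ (mul_nonneg (cnorm_nonneg p) (cnorm_nonneg q))
    have hcard : (Finset.HasAntidiagonal.antidiagonal k).filter (fun x : ℕ × ℕ => x.1 ≤ p.natDegree) ⊆
        (Finset.range (p.natDegree + 1)).image (fun i => (i, k - i)) := by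
      intro x hx
      simp only [Finset.mem_filter, Finset.HasAntidiagonal.mem_antidiagonal] at hx
      simp only [Finset.mem_image, Finset.mem_range]
      refine ⟨x.1, Nat.lt_succ_of_le hx.2, ?_⟩
      have h5 : x.1 + x.2 = k := hx.1
      obtain ⟨a, b⟩ := x
      simp only [Prod.mk.injEq]
      exact ⟨trivial, by omega⟩
    refine le_trans (Nat.cast_le.2 (Finset.card_le_card hcard)) ?_
    refine le_trans (Nat.cast_le.2 Finset.card_image_le) ?_
    rw [Finset.card_range]
    push_cast
    exact le_refl _
  exact Finset.sup'_le _ _ fun i _ => key i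

lemma sq2_le_cnorm (P : Polynomial ℂ) : sq2 P (P.natDegree + 1) ≤ (P.natDegree + 1 : ℝ) * cnorm P ^ 2 := by
  unfold sq2
  calc ∑ i ∈ Finset.range (P.natDegree + 1), ‖P.coeff i‖ ^ 2
      ≤ ∑ _i ∈ Finset.range (P.natDegree + 1), cnorm P ^ 2 :=
        Finset.sum_le_sum (fun i _ =>
          pow_le_pow_left₀ (norm_nonneg _) (abs_coeff_le_cnorm P i) 2)
    _ = (P.natDegree + 1 : ℝ) * cnorm P ^ 2 := by
        rw [Finset.sum_const, Finset.card_range, nsmul_eq_mul]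
        push_cast
        ring

lemma M_le_sqrt (P : Polynomial ℂ) (hP : P ≠ 0) :
    M P ≤ Real.sqrt (P.natDegree + 1) * cnorm P := by
  have h1 : M P ^ 2 ≤ (Real.sqrt (P.natDegree + 1) * cnorm P) ^ 2 := by
    rw [mul_pow, Real.sq_sqrt (by positivity)]
    exact le_trans (M_sq_le_sq2 hP) (sq2_le_cnorm P)
  have h2 : (0:ℝ) ≤ Real.sqrt (P.natDegree + 1) * cnorm P :=
    mul_nonneg (Real.sqrt_nonneg _) (cnorm_nonneg P)
  nlinarith [M_nonneg P]

lemma cnorm_le_two_pow_M {P : Polynomial ℂ} (hP : P ≠ 0) :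
    cnorm P ≤ 2 ^ P.natDegree * M P := by
  refine Finset.sup'_le _ _ fun k _ => ?_
  refine le_trans (abs_coeff_le_choose hP k) ?_
  refine mul_le_mul_of_nonneg_right ?_ (M_nonneg P)
  exact_mod_cast Nat.cast_le.2 (choose_le_two_pow P.natDegree k)

lemma choose_le_one {n k : ℕ} (hn : n ≤ 1) : n.choose k ≤ 1 := by
  interval_cases n
  · rcases k with _ | k
    · simp
    · simp [Nat.choose_eq_zero_of_lt]
  · rcases k with _ | k
    · simp
    · rcases k with _ | k
      · simp
      · rw [Nat.choose_eq_zero_of_lt (by omega)]; omega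

lemma cnorm_le_M {P : Polynomial ℂ} (hP : P ≠ 0) (hd : P.natDegree ≤ 1) : cnorm P ≤ M P := by
  refine Finset.sup'_le _ _ fun k _ => ?_
  refine le_trans (abs_coeff_le_choose hP k) ?_
  refine le_trans (mul_le_mul_of_nonneg_right ?_ (M_nonneg P)) (one_mul _).le
  exact_mod_cast Nat.cast_le.2 (choose_le_one hd)

lemma M_one : M (1 : Polynomial ℂ) = 1 := by
  unfold M
  simp [Polynomial.roots_one]

lemma M_prod (s : ℕ) (P : Fin s → Polynomial ℂ) (hP : ∀ i, P i ≠ 0) :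
    M (∏ i, P i) = ∏ i, M (P i) := by
  induction s with
  | zero => simp [M_one]
  | succ m ih =>
    rw [Fin.prod_univ_succ, Fin.prod_univ_succ (f := fun i => M (P i)),
      M_mul (hP 0) (Finset.prod_ne_zero_iff.2 fun i _ => hP i.succ), ih _ (fun i => hP i.succ)]

lemma cnorm_prod_le (s : ℕ) (P : Fin s → Polynomial ℂ) :
    cnorm (∏ i, P i) ≤ (∏ i, ((P i).natDegree + 1 : ℝ)) * ∏ i, cnorm (P i) := by
  induction s with
  | zero => simp [cnorm_one]
  | succ m ih =>
    rw [Fin.prod_univ_succ, Fin.prod_univ_succ (f := fun i => ((P i).natDegree + 1 : ℝ)),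
      Fin.prod_univ_succ (f := fun i => cnorm (P i))]
    refine le_trans (cnorm_mul_le _ _) ?_
    have h1 : (0:ℝ) ≤ ((P 0).natDegree + 1 : ℝ) := by positivity
    have h2 := ih (fun i => P i.succ)
    refine le_trans (mul_le_mul_of_nonneg_left
      (mul_le_mul_of_nonneg_left h2 (cnorm_nonneg _)) h1) (le_of_eq (by ring))

lemma sqrt_three_le : Real.sqrt 3 ≤ 1.74 := by
  rw [show (1.74:ℝ) = Real.sqrt (1.74^2) from (Real.sqrt_sq (by norm_num)).symm]
  exact Real.sqrt_le_sqrt (by norm_num)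

lemma sqrt_succ_le (x : ℝ) (hx : 2 ≤ x) : Real.sqrt (x + 1) ≤ 1.3 * Real.sqrt x := by
  have h13 : (1.3:ℝ) * Real.sqrt x = Real.sqrt (1.69 * x) := by
    rw [show (1.69:ℝ) = 1.3^2 by norm_num, Real.sqrt_mul (by norm_num), Real.sqrt_sq (by norm_num)]
  rw [h13]
  exact Real.sqrt_le_sqrt (by nlinarith)

lemma numeric (d : ℕ) (hd : 2 ≤ d) : (2:ℝ)^d * Real.sqrt (d+1) ≤ Real.exp d := by
  induction d, hd using Nat.le_induction with
  | base =>
    have he := Real.exp_one_gt_d9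
    have h2 : Real.exp (2:ℕ) = Real.exp 1 * Real.exp 1 := by
      rw [← Real.exp_add]; norm_num
    rw [h2]
    push_cast
    norm_num
    nlinarith [sqrt_three_le, Real.sqrt_nonneg 3]
  | succ d hd ih =>
    have he := Real.exp_one_gt_d9
    have hd2 : (2:ℝ) ≤ (d:ℝ) := by exact_mod_cast hd
    have hkey : Real.sqrt ((d:ℝ)+1+1) ≤ 1.3 * Real.sqrt ((d:ℝ)+1) := by
      refine sqrt_succ_le _ (by linarith)
    have hexp : Real.exp ((d:ℝ)+1) = Real.exp d * Real.exp 1 := by rw [← Real.exp_add]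
    push_cast
    rw [hexp]
    have h1 : (2:ℝ)^(d+1) * Real.sqrt ((d:ℝ)+1+1) ≤ 2 * (2:ℝ)^d * (1.3 * Real.sqrt ((d:ℝ)+1)) := by
      rw [pow_succ]
      have : (0:ℝ) ≤ (2:ℝ)^d := by positivity
      nlinarith [Real.sqrt_nonneg ((d:ℝ)+1+1)]
    refine le_trans h1 ?_
    have h2 : 2 * (2:ℝ)^d * (1.3 * Real.sqrt ((d:ℝ)+1)) = 2.6 * ((2:ℝ)^d * Real.sqrt ((d:ℝ)+1)) := by ring
    rw [h2]
    have h3 : (0:ℝ) ≤ (2:ℝ)^d * Real.sqrt ((d:ℝ)+1) := by positivity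
    have h4 : (0:ℝ) < Real.exp d := Real.exp_pos _
    nlinarith

lemma sqrt_le_exp_small (d : ℕ) (hd : d ≤ 1) : Real.sqrt (d+1) ≤ Real.exp d := by
  interval_cases d
  · simp
  · have he := Real.exp_one_gt_d9
    have h15 : Real.sqrt 2 ≤ 1.5 := by
      rw [show (1.5:ℝ) = Real.sqrt (1.5^2) from (Real.sqrt_sq (by norm_num)).symm]
      exact Real.sqrt_le_sqrt (by norm_num)
    push_cast
    norm_num
    nlinarith [h15]

theorem stmt_0 (s : ℕ) (P : Fin s → Polynomial ℂ) (hP : ∀ i, P i ≠ 0) :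
    Real.exp (-((∏ i, P i).natDegree : ℝ)) * cnorm (∏ i, P i) ≤ ∏ i, cnorm (P i) ∧
    ∏ i, cnorm (P i) ≤ Real.exp ((∏ i, P i).natDegree : ℝ) * cnorm (∏ i, P i) := by
  have hQ0 : (∏ i, P i) ≠ 0 := Finset.prod_ne_zero_iff.2 fun i _ => hP i
  set d := (∏ i, P i).natDegree with hd
  have hdsum : d = ∑ i, (P i).natDegree := by
    rw [hd, Polynomial.natDegree_prod _ _ (fun i _ => hP i)]
  have hprodnn : (0:ℝ) ≤ ∏ i, cnorm (P i) :=
    Finset.prod_nonneg fun i _ => cnorm_nonneg _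
  constructor
  · have h1 : (∏ i, ((P i).natDegree + 1 : ℝ)) ≤ Real.exp d := by
      have step : (∏ i, ((P i).natDegree + 1 : ℝ)) ≤ ∏ i, Real.exp ((P i).natDegree : ℝ) :=
        Finset.prod_le_prod (fun i _ => by positivity)
          (fun i _ => Real.add_one_le_exp ((P i).natDegree : ℝ))
      refine le_trans step ?_
      rw [← Real.exp_sum, hdsum]
      push_cast
      exact le_refl _
    have h2 : cnorm (∏ i, P i) ≤ Real.exp d * ∏ i, cnorm (P i) :=
      le_trans (cnorm_prod_le s P) (mul_le_mul_of_nonneg_right h1 hprodnn)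
    have h3 : (0:ℝ) < Real.exp (-(d:ℝ)) := Real.exp_pos _
    calc Real.exp (-(d:ℝ)) * cnorm (∏ i, P i)
        ≤ Real.exp (-(d:ℝ)) * (Real.exp d * ∏ i, cnorm (P i)) :=
          mul_le_mul_of_nonneg_left h2 h3.le
      _ = ∏ i, cnorm (P i) := by
          rw [← mul_assoc, ← Real.exp_add]
          simp
  · have hMle := M_le_sqrt _ hQ0
    rw [← hd] at hMle
    have hMprod := M_prod s P hP
    rcases le_or_gt d 1 with hcase | hcase
    · have h1 : ∏ i, cnorm (P i) ≤ ∏ i, M (P i) := by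
        refine Finset.prod_le_prod (fun i _ => cnorm_nonneg _) (fun i _ => ?_)
        refine cnorm_le_M (hP i) (le_trans ?_ hcase)
        rw [hdsum]
        exact Finset.single_le_sum (f := fun i => (P i).natDegree)
          (fun i _ => Nat.zero_le _) (Finset.mem_univ i)
      refine le_trans h1 ?_
      rw [← hMprod]
      refine le_trans hMle ?_
      refine mul_le_mul_of_nonneg_right ?_ (cnorm_nonneg _)
      exact_mod_cast sqrt_le_exp_small d hcase
    · have h1 : ∏ i, cnorm (P i) ≤ ∏ i, ((2:ℝ) ^ (P i).natDegree * M (P i)) := by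
        refine Finset.prod_le_prod (fun i _ => cnorm_nonneg _) (fun i _ => ?_)
        exact cnorm_le_two_pow_M (hP i)
      have h2 : ∏ i, ((2:ℝ) ^ (P i).natDegree * M (P i)) = (2:ℝ)^d * M (∏ i, P i) := by
        rw [Finset.prod_mul_distrib, Finset.prod_pow_eq_pow_sum, ← hdsum, hMprod]
      refine le_trans h1 ?_
      rw [h2]
      refine le_trans (mul_le_mul_of_nonneg_left hMle (by positivity)) ?_
      rw [← mul_assoc]
      refine mul_le_mul_of_nonneg_right ?_ (cnorm_nonneg _)
      exact_mod_cast numeric d hcase
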